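/- Let U ⊂ int(ℝ_+^k) be a compact set containing a nonempty open set, let d_0 := max_{x,y ∈ U} d_T(x,y) = ln λ_0 with λ_0 > 1, and let f : int(ℝ_+^k) → int(ℝ_+^k) be monotonic. If there exists c ∈ [0,1) such that f(λx) ≤ λ^c f(x) for all x ∈ U and all λ ∈ (1, λ_0], then d_T(f(x), f(y)) ≤ c · d_T(x,y) for all x,y ∈ U. -/

import Mathlib

open Filter Topology Set

noncomputable def Mratio {k : ℕ} (x y : Fin k → ℝ) : ℝ :=
  sInf {β : ℝ | 0 < β ∧ ∀ i, x i ≤ β * y i}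

noncomputable def dT {k : ℕ} (x y : Fin k → ℝ) : ℝ :=
  Real.log (max (Mratio x y) (Mratio y x))

def posOrth (k : ℕ) : Set (Fin k → ℝ) := {x | ∀ i, 0 < x i}

def nonnegOrth (k : ℕ) : Set (Fin k → ℝ) := {x | ∀ i, 0 ≤ x i}

lemma mratio_eq {k : ℕ} [Nonempty (Fin k)] {x y : Fin k → ℝ}
    (hx : x ∈ posOrth k) (hy : y ∈ posOrth k) :
    Mratio x y = Finset.univ.sup' Finset.univ_nonempty (fun i => x i / y i) := by
  set m := Finset.univ.sup' Finset.univ_nonempty (fun i => x i / y i) with hm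
  have hle : ∀ i, x i / y i ≤ m := by
    intro i
    have := Finset.le_sup' (fun j : Fin k => x j / y j) (Finset.mem_univ i)
    exact this
  have hmpos : 0 < m := by
    obtain ⟨i⟩ := ‹Nonempty (Fin k)›
    exact lt_of_lt_of_le (div_pos (hx i) (hy i)) (hle i)
  have hmem : m ∈ {β : ℝ | 0 < β ∧ ∀ i, x i ≤ β * y i} := by
    refine ⟨hmpos, fun i => ?_⟩
    have := hle i
    rw [div_le_iff₀ (hy i)] at this
    linarith [this]
  apply le_antisymm
  · exact csInf_le ⟨0, fun β hβ => hβ.1.le⟩ hmem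
  · apply le_csInf ⟨m, hmem⟩
    rintro β ⟨hβ, h⟩
    apply Finset.sup'_le
    intro i _
    rw [div_le_iff₀ (hy i)]
    exact h i

lemma mratio_pos {k : ℕ} [Nonempty (Fin k)] {x y : Fin k → ℝ}
    (hx : x ∈ posOrth k) (hy : y ∈ posOrth k) : 0 < Mratio x y := by
  rw [mratio_eq hx hy]
  obtain ⟨i⟩ := ‹Nonempty (Fin k)›
  refine lt_of_lt_of_le (div_pos (hx i) (hy i)) ?_
  have := Finset.le_sup' (fun j : Fin k => x j / y j) (Finset.mem_univ i)
  exact this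

lemma mratio_spec {k : ℕ} [Nonempty (Fin k)] {x y : Fin k → ℝ}
    (hx : x ∈ posOrth k) (hy : y ∈ posOrth k) : ∀ i, x i ≤ Mratio x y * y i := by
  intro i
  rw [mratio_eq hx hy]
  have h1 : x i / y i ≤ Finset.univ.sup' Finset.univ_nonempty (fun j : Fin k => x j / y j) := by
    have := Finset.le_sup' (fun j : Fin k => x j / y j) (Finset.mem_univ i)
    exact this
  rw [div_le_iff₀ (hy i)] at h1
  linarith

lemma one_le_maxratio {k : ℕ} [Nonempty (Fin k)] {x y : Fin k → ℝ}
    (hx : x ∈ posOrth k) (hy : y ∈ posOrth k) :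
    1 ≤ max (Mratio x y) (Mratio y x) := by
  by_contra h
  push_neg at h
  obtain ⟨i⟩ := ‹Nonempty (Fin k)›
  have a1 : Mratio x y < 1 := lt_of_le_of_lt (le_max_left _ _) h
  have a2 : Mratio y x < 1 := lt_of_le_of_lt (le_max_right _ _) h
  have h1 : x i ≤ Mratio x y * y i := mratio_spec hx hy i
  have h2 : y i ≤ Mratio y x * x i := mratio_spec hy hx i
  nlinarith [hx i, hy i]

lemma mratio_le {k : ℕ} {x y : Fin k → ℝ} {β : ℝ} (hβ : 0 < β)
    (h : ∀ i, x i ≤ β * y i) : Mratio x y ≤ β :=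
  csInf_le ⟨0, fun _ hγ => hγ.1.le⟩ ⟨hβ, h⟩

/-- local version of Lemma 1 (Corollary 2 in the paper). -/
theorem stmt4 {k : ℕ} (U : Set (Fin k → ℝ)) (hU : U ⊆ posOrth k)
    (hUc : IsCompact U)
    (hopen : ∃ V : Set (Fin k → ℝ), IsOpen V ∧ V.Nonempty ∧ V ⊆ U)
    (l₀ : ℝ) (hl₀ : 1 < l₀)
    (hdiam : (∀ x ∈ U, ∀ y ∈ U, dT x y ≤ Real.log l₀) ∧
      ∃ x ∈ U, ∃ y ∈ U, dT x y = Real.log l₀)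
    (f : (Fin k → ℝ) → (Fin k → ℝ))
    (hmap : ∀ x ∈ posOrth k, f x ∈ posOrth k)
    (hmono : ∀ x ∈ posOrth k, ∀ y ∈ posOrth k, x ≤ y → f x ≤ f y)
    (c : ℝ) (hc0 : 0 ≤ c) (hc1 : c < 1)
    (hscale : ∀ x ∈ U, ∀ l : ℝ, 1 < l → l ≤ l₀ → f (l • x) ≤ (l ^ c) • f x) :
    ∀ x ∈ U, ∀ y ∈ U, dT (f x) (f y) ≤ c * dT x y := by
  rcases Nat.eq_zero_or_pos k with hk | hk
  · exfalso
    subst hk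
    obtain ⟨x, _, y, _, hxy⟩ := hdiam.2
    have hM : ∀ u v : Fin 0 → ℝ, Mratio u v = 0 := by
      intro u v
      have : {β : ℝ | 0 < β ∧ ∀ i : Fin 0, u i ≤ β * v i} = Set.Ioi 0 := by
        ext β
        constructor
        · rintro ⟨h, _⟩; exact h
        · intro h; exact ⟨h, fun i => i.elim0⟩
      rw [Mratio, this, csInf_Ioi]
    have : dT x y = 0 := by simp [dT, hM]
    rw [this] at hxy
    have := Real.log_pos hl₀
    linarith
  haveI : Nonempty (Fin k) := ⟨⟨0, hk⟩⟩
  -- key sublemma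
  have key : ∀ a ∈ U, ∀ b ∈ U,
      Mratio (f a) (f b) ≤ (max (Mratio a b) (Mratio b a)) ^ c := by
    intro a ha b hb
    have hpa := hU ha
    have hpb := hU hb
    set μ := Mratio a b with hμ
    set m := max (Mratio a b) (Mratio b a) with hm
    have hm1 : 1 ≤ m := one_le_maxratio hpa hpb
    have hm0 : 0 < m := lt_of_lt_of_le one_pos hm1
    have hmc1 : 1 ≤ m ^ c := Real.one_le_rpow hm1 hc0
    have hmc0 : 0 < m ^ c := lt_of_lt_of_le one_pos hmc1
    have hspec : ∀ i, a i ≤ μ * b i := mratio_spec hpa hpb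
    by_cases hμ1 : 1 < μ
    · -- use scaling
      have hml : m ≤ l₀ := by
        have hd := hdiam.1 a ha b hb
        rw [dT, ← hm] at hd
        have := Real.exp_le_exp.mpr hd
        rwa [Real.exp_log hm0, Real.exp_log (lt_trans one_pos hl₀)] at this
      have hμl : μ ≤ l₀ := le_trans (le_max_left _ _) hml
      have hab : a ≤ μ • b := fun i => by simpa using hspec i
      have h1 : f a ≤ f (μ • b) := by
        apply hmono a hpa (μ • b) _ hab
        intro i
        exact mul_pos (lt_trans one_pos hμ1) (hpb i)
      have h2 : f (μ • b) ≤ (μ ^ c) • f b := hscale b hb μ hμ1 hμl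
      have h3 : ∀ i, f a i ≤ μ ^ c * f b i := by
        intro i
        calc f a i ≤ f (μ • b) i := h1 i
        _ ≤ (μ ^ c) • f b i := h2 i
        _ = μ ^ c * f b i := rfl
      have h4 : Mratio (f a) (f b) ≤ μ ^ c :=
        mratio_le (Real.rpow_pos_of_pos (lt_trans one_pos hμ1) c) h3
      refine le_trans h4 ?_
      exact Real.rpow_le_rpow (le_of_lt (lt_trans one_pos hμ1)) (le_max_left _ _) hc0
    · -- μ ≤ 1 : a ≤ b
      push_neg at hμ1
      have hab : a ≤ b := by
        intro i
        calc a i ≤ μ * b i := hspec i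
        _ ≤ 1 * b i := mul_le_mul_of_nonneg_right hμ1 (hpb i).le
        _ = b i := one_mul _
      have h1 : f a ≤ f b := hmono a hpa b hpb hab
      apply mratio_le hmc0
      intro i
      calc f a i ≤ f b i := h1 i
      _ ≤ m ^ c * f b i := le_mul_of_one_le_left (hmap b hpb i).le hmc1
  -- main conclusion
  intro x hx y hy
  have hpx := hU hx
  have hpy := hU hy
  set m := max (Mratio x y) (Mratio y x) with hm
  have hm1 : 1 ≤ m := one_le_maxratio hpx hpy
  have hm0 : 0 < m := lt_of_lt_of_le one_pos hm1
  have k1 := key x hx y hy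
  have k2 := key y hy x hx
  rw [max_comm] at k2
  have hmax : max (Mratio (f x) (f y)) (Mratio (f y) (f x)) ≤ m ^ c :=
    max_le k1 k2
  have hpos : 0 < max (Mratio (f x) (f y)) (Mratio (f y) (f x)) :=
    lt_of_lt_of_le (mratio_pos (hmap x hpx) (hmap y hpy)) (le_max_left _ _)
  calc dT (f x) (f y) = Real.log (max (Mratio (f x) (f y)) (Mratio (f y) (f x))) := rfl
  _ ≤ Real.log (m ^ c) := Real.log_le_log hpos hmax
  _ = c * Real.log m := Real.log_rpow hm0 c
  _ = c * dT x y := by rw [dT, ← hm]
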